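/- Membership of the classic benchmarks in the SEQOPT classes. Let n ≥ 2. Then: (i) OneMax ∈ SEQOPT_0 (the class with k = 0 and no parameters d); (ii) Trap = Jump_n ∈ SEQOPT_1(1); (iii) for every integer d with 2 ≤ d ≤ n − 1, Cliff_d ∈ SEQOPT_2(d, d − 1); and (iv) for every integer m with 2 ≤ m ≤ n − 1, Jump_m ∈ SEQOPT_2(m, 1). -/

import Mathlib

open MeasureTheory
open scoped ENNReal NNReal

namespace MMAHHStmt

/-- The two acceptance operators. -/
inductive Op : Type
  | OI : Op
  | OW : Op
  deriving DecidableEq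

instance : MeasurableSpace Op := ⊤

/-- Search points: bit-strings of length `n`. -/
abbrev Point (n : ℕ) := Fin n → Bool

/-- The number of one-bits of a bit-string. -/
def ones {n : ℕ} (x : Point n) : ℕ := (Finset.univ.filter fun i => x i = true).card

/-- The all-ones string, the global optimum of all benchmarks considered. -/
def optimum (n : ℕ) : Point n := fun _ => true

/-- Flipping the bit in position `v`. -/
def flipBit {n : ℕ} (x : Point n) (v : Fin n) : Point n := Function.update x v (!(x v))

open Classical in
/-- The search point obtained from `x` by proposing to flip bit `v` and applying the
acceptance operator `op` for the objective function `f`. -/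
noncomputable def movedPoint {n : ℕ} (f : Point n → ℝ) (op : Op) (x : Point n) (v : Fin n) :
    Point n :=
  match op with
  | Op.OI => if f x < f (flipBit x v) then flipBit x v else x
  | Op.OW => if f (flipBit x v) < f x then flipBit x v else x

open Classical in
/-- One-step transition probability of the search point under acceptance operator `op`:
a uniformly random bit is flipped and the move is accepted or rejected according to `op`. -/
noncomputable def moveProb {n : ℕ} (f : Point n → ℝ) (op : Op) (x x' : Point n) : ℝ≥0∞ :=
  ((Finset.univ.filter fun v => movedPoint f op x v = x').card : ℝ≥0∞) / n

/-- Transition probabilities of the two-state Markov chain on the acceptance operators. -/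
noncomputable def switchProb (p q : ℝ) : Op → Op → ℝ≥0∞
  | Op.OI, Op.OI => ENNReal.ofReal (1 - p)
  | Op.OI, Op.OW => ENNReal.ofReal p
  | Op.OW, Op.OI => ENNReal.ofReal q
  | Op.OW, Op.OW => ENNReal.ofReal (1 - q)

/-- One-step transition probabilities of the MMAHH on the state space
`Point n × Op`: the search point moves according to the current acceptance operator, and,
independently, the operator switches according to the two-state Markov chain. -/
noncomputable def mmahhTrans {n : ℕ} (f : Point n → ℝ) (p q : ℝ) :
    Point n × Op → Point n × Op → ℝ≥0∞ :=
  fun s s' => moveProb f s.2 s.1 s'.1 * switchProb p q s.2 s'.2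

/-- `X` is (a version of) the MMAHH Markov chain with objective function `f` and switching
probabilities `p` and `q`, under the measure `μ`: each `X t` is measurable, and conditionally
on any history, the next state is distributed according to `mmahhTrans`. -/
def IsMMAHH {n : ℕ} {Ω : Type*} [MeasurableSpace Ω] (μ : Measure Ω)
    (X : ℕ → Ω → Point n × Op) (f : Point n → ℝ) (p q : ℝ) : Prop :=
  (∀ t, Measurable (X t)) ∧
  ∀ (t : ℕ) (σ : ℕ → Point n × Op) (s' : Point n × Op),
    μ {ω | (∀ i ≤ t, X i ω = σ i) ∧ X (t + 1) ω = s'}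
      = μ {ω | ∀ i ≤ t, X i ω = σ i} * mmahhTrans f p q (σ t) s'

/-- The runtime: the first hitting time of the global optimum, as an extended natural number
(`⊤` if the optimum is never reached). -/
noncomputable def hitTime {n : ℕ} {Ω : Type*} (X : ℕ → Ω → Point n × Op) (ω : Ω) : ℕ∞ :=
  ⨅ t ∈ {t : ℕ | (X t ω).1 = optimum n}, (t : ℕ∞)

/-- The `k`-th switching time between the two acceptance operators (with junk value given by
`Nat.sInf ∅ = 0` on the probability-zero event that no further switch occurs). -/
noncomputable def switchTime {n : ℕ} {Ω : Type*} (X : ℕ → Ω → Point n × Op) : ℕ → Ω → ℕ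
  | 0, _ => 0
  | k + 1, ω =>
      sInf {t : ℕ | switchTime X k ω ≤ t ∧ (X t ω).2 ≠ (X (switchTime X k ω) ω).2}

/-- The OneMax benchmark. -/
noncomputable def OneMax (n : ℕ) (x : Point n) : ℝ := (ones x : ℝ)

/-- The Jump benchmark with gap parameter `m`. -/
noncomputable def Jump (n m : ℕ) (x : Point n) : ℝ :=
  if ones x ≤ n - m ∨ ones x = n then (m : ℝ) + (ones x : ℝ) else (n : ℝ) - (ones x : ℝ)

/-- The Cliff benchmark with difficulty parameter `d`. -/
noncomputable def Cliff (n d : ℕ) (x : Point n) : ℝ :=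
  if ones x ≤ n - d then (ones x : ℝ) else (ones x : ℝ) - (d : ℝ) + 1 / 2

/-- `f : {0,1}^n → ℝ` belongs to the class `SEQOPT_k(d 1, …, d k)`, where `d 0 = n` and
`d (k+1) = 0`: the all-ones string is the unique global maximum, and between consecutive
layers the function is alternatingly increasing and decreasing, with sign changes exactly at
the layers `d 1 > ⋯ > d k`. -/
def SeqOpt (n k : ℕ) (d : ℕ → ℕ) (f : Point n → ℝ) : Prop :=
  d 0 = n ∧ d (k + 1) = 0 ∧ (∀ i, i ≤ k → d (i + 1) < d i) ∧
  (∀ x : Point n, x ≠ optimum n → f x < f (optimum n)) ∧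
  (∀ l, l ≤ k → ∀ h : ℕ, d (l + 1) ≤ h → h < d l →
    ((k - l) % 2 = 0 →
      ∀ x y : Point n, n - ones x = h → n - ones y = h + 1 → f x > f y) ∧
    ((k - l) % 2 = 1 →
      ∀ x y : Point n, n - ones x = h → n - ones y = h + 1 → f x < f y))

lemma ones_le {n : ℕ} (x : Point n) : ones x ≤ n := by
  classical
  simpa [ones] using (Finset.card_filter_le Finset.univ fun i => x i = true)

lemma ones_optimum (n : ℕ) : ones (optimum n) = n := by
  classical
  simp [ones, optimum]

lemma ones_lt_of_ne {n : ℕ} (x : Point n) (hx : x ≠ optimum n) : ones x < n := by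
  classical
  rcases lt_or_eq_of_le (ones_le x) with h | h
  · exact h
  · exfalso
    apply hx
    have hcard : (Finset.univ.filter fun i => x i = true).card = (Finset.univ : Finset (Fin n)).card := by
      simpa [ones] using h
    have hall : (Finset.univ.filter fun i => x i = true) = (Finset.univ : Finset (Fin n)) :=
      Finset.eq_of_subset_of_card_le (Finset.filter_subset _ _) (le_of_eq hcard.symm)
    funext i
    have : i ∈ Finset.univ.filter fun i => x i = true := by rw [hall]; exact Finset.mem_univ i
    simpa [optimum] using (Finset.mem_filter.mp this).2


lemma jump_low {n m : ℕ} {x : Point n} (h : ones x ≤ n - m ∨ ones x = n) :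
    Jump n m x = (m : ℝ) + ones x := by simp [Jump, h]

lemma jump_high {n m : ℕ} {x : Point n} (h : ¬(ones x ≤ n - m ∨ ones x = n)) :
    Jump n m x = (n : ℝ) - ones x := by simp only [Jump, if_neg h]

lemma jump_opt (n m : ℕ) : Jump n m (optimum n) = (m : ℝ) + n := by
  rw [jump_low (Or.inr (ones_optimum n)), ones_optimum]

lemma cliff_low {n d : ℕ} {x : Point n} (h : ones x ≤ n - d) :
    Cliff n d x = (ones x : ℝ) := by simp [Cliff, h]

lemma cliff_high {n d : ℕ} {x : Point n} (h : ¬ ones x ≤ n - d) :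
    Cliff n d x = (ones x : ℝ) - d + 1 / 2 := by simp only [Cliff, if_neg h]

lemma cliff_opt {n d : ℕ} (hd : 0 < d) (hdn : d < n) :
    Cliff n d (optimum n) = (n : ℝ) - d + 1 / 2 := by
  rw [cliff_high (by rw [ones_optimum]; omega), ones_optimum]

/-- Membership of the classic benchmarks in the SEQOPT classes: `OneMax ∈ SEQOPT_0`,
`Trap = Jump_n ∈ SEQOPT_1(1)`, `Cliff_d ∈ SEQOPT_2(d, d-1)` and `Jump_m ∈ SEQOPT_2(m, 1)`. -/
theorem benchmarks_in_seqopt (n : ℕ) (hn : 2 ≤ n) :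
    SeqOpt n 0 (fun i => if i = 0 then n else 0) (OneMax n) ∧
    SeqOpt n 1 (fun i => if i = 0 then n else if i = 1 then 1 else 0) (Jump n n) ∧
    (∀ d : ℕ, 2 ≤ d → d ≤ n - 1 →
      SeqOpt n 2
        (fun i => if i = 0 then n else if i = 1 then d else if i = 2 then d - 1 else 0)
        (Cliff n d)) ∧
    (∀ m : ℕ, 2 ≤ m → m ≤ n - 1 →
      SeqOpt n 2
        (fun i => if i = 0 then n else if i = 1 then m else if i = 2 then 1 else 0)
        (Jump n m)) := by
  refine ⟨?_, ?_, ?_, ?_⟩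
  -- Part (i): OneMax
  · refine ⟨by simp, by simp, ?_, ?_, ?_⟩
    · intro i hi
      interval_cases i
      simpa using (by omega : 0 < n)
    · intro x hx
      have := ones_lt_of_ne x hx
      simp only [OneMax, ones_optimum]
      exact_mod_cast this
    · intro l hl h h1 h2
      simp only [Nat.le_zero] at hl
      subst hl
      norm_num at h1 h2
      refine ⟨?_, by omega⟩
      intro _ x y hx hy
      have hxle := ones_le x
      have hyle := ones_le y
      have : ones y < ones x := by omega
      simp only [OneMax, gt_iff_lt]
      exact_mod_cast this
  -- Part (ii): Trap = Jump n n
  · refine ⟨by simp, by simp, ?_, ?_, ?_⟩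
    · intro i hi
      interval_cases i <;> simp <;> omega
    · intro x hx
      have hxlt := ones_lt_of_ne x hx
      rw [jump_opt]
      by_cases h0 : ones x ≤ n - n ∨ ones x = n
      · rw [jump_low h0]
        have hx0 : ones x = 0 := by omega
        rw [hx0]
        have : (2:ℝ) ≤ n := by exact_mod_cast hn
        push_cast
        linarith
      · rw [jump_high h0]
        have h1 : 1 ≤ ones x := by omega
        have : (1:ℝ) ≤ (ones x : ℝ) := by exact_mod_cast h1
        have h2 : (0:ℝ) < n := by positivity
        linarith
    · intro l hl h h1 h2
      interval_cases l <;> norm_num at h1 h2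
      · -- l = 0, sign odd: f x < f y, 1 ≤ h < n
        refine ⟨by omega, ?_⟩
        intro _ x y hx hy
        have hxle := ones_le x
        have hyle := ones_le y
        rw [jump_high (by omega)]
        by_cases h0 : ones y ≤ n - n ∨ ones y = n
        · rw [jump_low h0]
          have hy0 : ones y = 0 := by omega
          rw [hy0]
          have hc : (ones x : ℝ) < n := by exact_mod_cast (by omega : ones x < n)
          have : (1:ℝ) ≤ (ones x : ℝ) := by exact_mod_cast (by omega : 1 ≤ ones x)
          push_cast
          linarith
        · rw [jump_high h0]
          have hc : (ones y : ℝ) < ones x := by exact_mod_cast (by omega : ones y < ones x)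
          linarith
      · -- l = 1, sign even: f x > f y, h = 0
        refine ⟨?_, by omega⟩
        intro _ x y hx hy
        have hxle := ones_le x
        have hyle := ones_le y
        have hx' : ones x = n := by omega
        rw [jump_low (Or.inr hx'), jump_high (by omega), hx']
        have hc : (ones y : ℝ) ≤ n := by exact_mod_cast hyle
        have : (2:ℝ) ≤ n := by exact_mod_cast hn
        have : (0:ℝ) ≤ ones y := by positivity
        linarith
  -- Part (iii): Cliff
  · intro d hd2 hdn
    have hdlt : d < n := by omega
    refine ⟨by simp, by simp, ?_, ?_, ?_⟩
    · intro i hi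
      interval_cases i <;> simp <;> omega
    · intro x hx
      have hxlt := ones_lt_of_ne x hx
      have hxle := ones_le x
      rw [cliff_opt (by omega) hdlt]
      have hdr : (d:ℝ) < n := by exact_mod_cast hdlt
      by_cases h0 : ones x ≤ n - d
      · rw [cliff_low h0]
        have : (ones x : ℝ) ≤ (n - d : ℕ) := by exact_mod_cast h0
        have hc : ((n - d : ℕ) : ℝ) = (n:ℝ) - d := by
          rw [Nat.cast_sub (le_of_lt hdlt)]
        linarith [hc ▸ this]
      · rw [cliff_high h0]
        have : (ones x : ℝ) < n := by exact_mod_cast hxlt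
        linarith
    · intro l hl h h1 h2
      interval_cases l <;> norm_num at h1 h2
      · -- l = 0, even : f x > f y, d ≤ h < n
        refine ⟨?_, by omega⟩
        intro _ x y hx hy
        have hxle := ones_le x
        have hyle := ones_le y
        rw [cliff_low (by omega), cliff_low (by omega)]
        exact_mod_cast (by omega : ones y < ones x)
      · -- l = 1, odd : f x < f y, h = d - 1
        refine ⟨by omega, ?_⟩
        intro _ x y hx hy
        have hxle := ones_le x
        have hyle := ones_le y
        have hx' : ones x = n - d + 1 := by omega
        have hy' : ones y = n - d := by omega
        rw [cliff_high (by omega), cliff_low (by omega), hx', hy']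
        have c1 : ((n - d + 1 : ℕ) : ℝ) = (n:ℝ) - d + 1 := by
          push_cast [Nat.cast_sub (le_of_lt hdlt)]; ring
        have c2 : ((n - d : ℕ) : ℝ) = (n:ℝ) - d := by
          rw [Nat.cast_sub (le_of_lt hdlt)]
        rw [c1, c2]
        have : (2:ℝ) ≤ d := by exact_mod_cast hd2
        linarith
      · -- l = 2, even : f x > f y, 0 ≤ h < d - 1
        refine ⟨?_, by omega⟩
        intro _ x y hx hy
        have hxle := ones_le x
        have hyle := ones_le y
        rw [cliff_high (by omega), cliff_high (by omega)]
        have : (ones y : ℝ) < ones x := by exact_mod_cast (by omega : ones y < ones x)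
        linarith
  -- Part (iv): Jump m
  · intro m hm2 hmn
    have hmlt : m < n := by omega
    refine ⟨by simp, by simp, ?_, ?_, ?_⟩
    · intro i hi
      interval_cases i <;> simp <;> omega
    · intro x hx
      have hxlt := ones_lt_of_ne x hx
      have hxle := ones_le x
      rw [jump_opt]
      have hmr : (0:ℝ) < m := by exact_mod_cast (by omega : 0 < m)
      by_cases h0 : ones x ≤ n - m ∨ ones x = n
      · rw [jump_low h0]
        have : (ones x : ℝ) < n := by exact_mod_cast hxlt
        linarith
      · rw [jump_high h0]
        have : (1:ℝ) ≤ (ones x : ℝ) := by exact_mod_cast (by omega : 1 ≤ ones x)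
        linarith
    · intro l hl h h1 h2
      interval_cases l <;> norm_num at h1 h2
      · -- l = 0, even : f x > f y, m ≤ h < n
        refine ⟨?_, by omega⟩
        intro _ x y hx hy
        have hxle := ones_le x
        have hyle := ones_le y
        rw [jump_low (Or.inl (by omega)), jump_low (Or.inl (by omega))]
        have : (ones y : ℝ) < ones x := by exact_mod_cast (by omega : ones y < ones x)
        linarith
      · -- l = 1, odd : f x < f y, 1 ≤ h < m
        refine ⟨by omega, ?_⟩
        intro _ x y hx hy
        have hxle := ones_le x
        have hyle := ones_le y
        rw [jump_high (by omega)]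
        have hxval : (1:ℝ) ≤ (ones x : ℝ) := by exact_mod_cast (by omega : 1 ≤ ones x)
        by_cases h0 : ones y ≤ n - m ∨ ones y = n
        · rw [jump_low h0]
          have hyge : (0:ℝ) ≤ ones y := by positivity
          have hm0 : (0:ℝ) < m := by exact_mod_cast (by omega : 0 < m)
          have hc : (n:ℝ) + 1 ≤ (ones x : ℝ) + m := by
            exact_mod_cast (by omega : n + 1 ≤ ones x + m)
          linarith
        · rw [jump_high h0]
          have : (ones y : ℝ) < ones x := by exact_mod_cast (by omega : ones y < ones x)
          linarith
      · -- l = 2, even : f x > f y, h = 0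
        refine ⟨?_, by omega⟩
        intro _ x y hx hy
        have hxle := ones_le x
        have hyle := ones_le y
        have hx' : ones x = n := by omega
        rw [jump_low (Or.inr hx'), jump_high (by omega), hx']
        have c1 : (ones y : ℝ) ≤ n := by exact_mod_cast hyle
        have : (0:ℝ) ≤ ones y := by positivity
        have hm0 : (0:ℝ) < m := by exact_mod_cast (by omega : 0 < m)
        linarith
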